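/- For the k-price auction with 2 ≤ k ≤ n+1, there exists a pure-strategy Nash equilibrium with seller revenue p if and only if v_{n−(k−3)} ≤ p ≤ v_1 (with the conventions v_{n+1} = 0 and v_0 undefined, the lower bound is 0 when k = 2 and v_2 when k = n+1). -/

import Mathlib

open Classical

/-- The k-th highest bid (k counted from 1). -/
noncomputable def kthHighest {n : ℕ} (b : Fin n → ℝ) (k : ℕ) : ℝ :=
  ((List.ofFn b).mergeSort (fun x y => decide (y ≤ x))).getD (k - 1) 0

/-- Agent `i` wins: her bid is highest, with ties broken toward the
agent with the highest valuation, i.e. (for strictly decreasing valuations)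
the lowest index among the maximal bidders. -/
def wins {n : ℕ} (b : Fin n → ℝ) (i : Fin n) : Prop :=
  (∀ j, b j ≤ b i) ∧ ∀ j, b j = b i → i ≤ j

/-- The price paid by the winner in the k-price auction (2 ≤ k ≤ n), or in the
first-price auction (the case k = n+1), where the winner pays the highest bid. -/
noncomputable def price {n : ℕ} (k : ℕ) (b : Fin n → ℝ) : ℝ :=
  if k = n + 1 then kthHighest b 1 else kthHighest b k

/-- The winner gets her valuation minus the price; losers get 0. -/
noncomputable def utility {n : ℕ} (v : Fin n → ℝ) (k : ℕ) (b : Fin n → ℝ)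
    (i : Fin n) : ℝ :=
  if wins b i then v i - price k b else 0

/-- Pure-strategy Nash equilibrium with nonnegative bids: no agent can strictly
improve her utility by a unilateral deviation to another nonnegative bid. -/
def NashEq {n : ℕ} (v : Fin n → ℝ) (k : ℕ) (b : Fin n → ℝ) : Prop :=
  (∀ i, 0 ≤ b i) ∧
  ∀ i : Fin n, ∀ b' : ℝ, 0 ≤ b' →
    utility v k (Function.update b i b') i ≤ utility v k b i

/-- One-based valuation indexing, with the convention `v_{n+1} = 0`. -/
noncomputable def vIdx {n : ℕ} (v : Fin n → ℝ) (j : ℕ) : ℝ :=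
  if h : 1 ≤ j ∧ j ≤ n then v ⟨j - 1, by omega⟩ else 0

section Helpers

open List

noncomputable def sortD {n : ℕ} (b : Fin n → ℝ) : List ℝ :=
  (List.ofFn b).mergeSort (fun x y => decide (y ≤ x))

lemma sortD_perm {n : ℕ} (b : Fin n → ℝ) : (sortD b).Perm (List.ofFn b) :=
  List.mergeSort_perm _ _

lemma sortD_length {n : ℕ} (b : Fin n → ℝ) : (sortD b).length = n := by
  rw [(sortD_perm b).length_eq, List.length_ofFn]

lemma sortD_sorted {n : ℕ} (b : Fin n → ℝ) : (sortD b).Pairwise (· ≥ ·) := by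
  have h := List.pairwise_mergeSort (le := fun x y : ℝ => decide (y ≤ x))
    (fun a b c hab hbc => by simp_all; linarith)
    (fun a b => by simp [le_total b a]) (List.ofFn b)
  exact h.imp (fun {a b} hab => by simpa using hab)

lemma kthHighest_def {n : ℕ} (b : Fin n → ℝ) (k : ℕ) :
    kthHighest b k = (sortD b).getD (k - 1) 0 := rfl

lemma kthHighest_eq_of {n : ℕ} (b : Fin n → ℝ) (l : List ℝ)
    (hs : l.Pairwise (· ≥ ·)) (hp : (List.ofFn b).Perm l) (j : ℕ) :
    kthHighest b j = l.getD (j - 1) 0 := by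
  have : sortD b = l :=
    List.Perm.eq_of_pairwise (fun a b _ _ h1 h2 => le_antisymm h2 h1) (sortD_sorted b) hs
      ((sortD_perm b).trans hp)
  rw [kthHighest_def, this]

lemma sortD_mem {n : ℕ} (b : Fin n → ℝ) {x : ℝ} (hx : x ∈ sortD b) :
    ∃ i, b i = x := by
  have := (sortD_perm b).mem_iff.mp hx
  rwa [List.mem_ofFn] at this

lemma kthHighest_nonneg {n : ℕ} (b : Fin n → ℝ) (hb : ∀ i, 0 ≤ b i) (j : ℕ) :
    0 ≤ kthHighest b j := by
  rw [kthHighest_def]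
  by_cases h : j - 1 < (sortD b).length
  · rw [List.getD_eq_getElem _ _ h]
    obtain ⟨i, hi⟩ := sortD_mem b (List.getElem_mem h)
    rw [← hi]; exact hb i
  · rw [List.getD_eq_default _ _ (le_of_not_gt h)]

lemma kthHighest_ge {n : ℕ} (b : Fin n → ℝ) {c : ℝ} (hb : ∀ i, c ≤ b i)
    {j : ℕ} (hj : j - 1 < n) : c ≤ kthHighest b j := by
  rw [kthHighest_def]
  have h : j - 1 < (sortD b).length := by rw [sortD_length]; exact hj
  rw [List.getD_eq_getElem _ _ h]
  obtain ⟨i, hi⟩ := sortD_mem b (List.getElem_mem h)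
  rw [← hi]; exact hb i

lemma sorted_getElem_le {l : List ℝ} (hs : l.Pairwise (· ≥ ·)) {i j : ℕ}
    (hij : i ≤ j) (hj : j < l.length) : l[j] ≤ l[i] := by
  rcases eq_or_lt_of_le hij with h | h
  · subst h; exact le_refl _
  · exact hs.rel_get_of_lt (a := ⟨i, lt_of_le_of_lt hij hj⟩) (b := ⟨j, hj⟩) h

lemma exists_wins {n : ℕ} (hn : 0 < n) (b : Fin n → ℝ) : ∃ w, wins b w := by
  have hne : (Finset.univ : Finset (Fin n)).Nonempty := by
    have : Nonempty (Fin n) := ⟨⟨0, hn⟩⟩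
    exact Finset.univ_nonempty
  obtain ⟨m, hm, hmax⟩ := Finset.exists_max_image Finset.univ b hne
  set S := Finset.univ.filter (fun i => b i = b m) with hS
  have hSne : S.Nonempty := ⟨m, by simp [hS]⟩
  refine ⟨S.min' hSne, ?_, ?_⟩
  · have : b (S.min' hSne) = b m := by
      have := S.min'_mem hSne; simp [hS] at this; exact this
    intro j; rw [this]; exact hmax j (Finset.mem_univ j)
  · intro j hj
    have hbm : b (S.min' hSne) = b m := by
      have := S.min'_mem hSne; simp [hS] at this; exact this
    exact S.min'_le j (by simp only [hS, Finset.mem_filter, Finset.mem_univ, true_and]; exact hj.trans hbm)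

lemma wins_unique {n : ℕ} {b : Fin n → ℝ} {i j : Fin n}
    (hi : wins b i) (hj : wins b j) : i = j := by
  have h1 : b i = b j := le_antisymm (hj.1 i) (hi.1 j)
  exact le_antisymm (hi.2 j h1.symm) (hj.2 i h1)

lemma ofFn_update {n : ℕ} (b : Fin n → ℝ) (i : Fin n) (x : ℝ) :
    List.ofFn (Function.update b i x) = (List.ofFn b).set i.val x := by
  apply List.ext_getElem
  · simp
  · intro m h1 h2
    rw [List.getElem_ofFn, Function.update_apply, List.getElem_set]
    by_cases hm : i.val = m
    · rw [if_pos (Fin.ext hm.symm), if_pos hm]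
    · rw [if_neg (fun hc => hm (by simpa using congrArg Fin.val hc.symm)), if_neg hm,
        List.getElem_ofFn]

lemma set_perm_cons_eraseIdx {α : Type*} (l : List α) (i : ℕ) (hi : i < l.length)
    (x : α) : (l.set i x).Perm (x :: l.eraseIdx i) := by
  rw [List.set_eq_take_append_cons_drop, if_pos hi, List.eraseIdx_eq_take_drop_succ]
  exact List.perm_middle

lemma eraseIdx_perm_erase (l : List ℝ) (i : ℕ) (hi : i < l.length) :
    (l.eraseIdx i).Perm (l.erase l[i]) := by
  have h1 : l.Perm (l[i] :: l.eraseIdx i) := by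
    conv_lhs => rw [← List.take_append_drop i l, ← List.getElem_cons_drop hi]
    rw [List.eraseIdx_eq_take_drop_succ]
    exact List.perm_middle
  have h2 : l.Perm (l[i] :: l.erase l[i]) :=
    List.perm_cons_erase (List.getElem_mem hi)
  exact (h1.symm.trans h2).cons_inv

lemma perm_update {n : ℕ} (b : Fin n → ℝ) (i : Fin n) (x : ℝ) (l : List ℝ)
    (hl : (List.ofFn b).Perm l) :
    (List.ofFn (Function.update b i x)).Perm (x :: l.erase (b i)) := by
  rw [ofFn_update]
  have hi : i.val < (List.ofFn b).length := by rw [List.length_ofFn]; exact i.isLt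
  refine (set_perm_cons_eraseIdx _ _ hi x).trans (List.Perm.cons x ?_)
  have hbi : (List.ofFn b)[i.val] = b i := by
    rw [List.getElem_ofFn]
  refine ((eraseIdx_perm_erase _ _ hi).trans ?_)
  rw [hbi]
  exact hl.erase (b i)

lemma eraseIdx_replicate {α : Type*} (m i : ℕ) (a : α) (hi : i < m) :
    (List.replicate m a).eraseIdx i = List.replicate (m - 1) a := by
  rw [List.eraseIdx_eq_take_drop_succ, List.take_replicate, List.drop_replicate]
  rw [← List.replicate_add]
  congr 1
  omega

end Helpers

section GetDHelpers
open List

lemma getD_repl_append_left (a c : ℝ) {m r j : ℕ} (hj : j < m) :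
    (List.replicate m a ++ List.replicate r c).getD j 0 = a := by
  rw [List.getD_eq_getElem _ _ (by simp; omega)]
  rw [List.getElem_append_left (by simpa using hj)]
  exact List.getElem_replicate _

lemma getD_repl_append_right (a c : ℝ) {m r j : ℕ} (hj : m ≤ j) (h2 : j < m + r) :
    (List.replicate m a ++ List.replicate r c).getD j 0 = c := by
  rw [List.getD_eq_getElem _ _ (by simp; omega)]
  rw [List.getElem_append_right (by simpa using hj)]
  exact List.getElem_replicate _

end GetDHelpers

section Construct

open List

lemma ofFn_bid (n k : ℕ) (hn : 2 ≤ n) (hk2 : 2 ≤ k) (hkn : k ≤ n) (H p : ℝ) :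
    List.ofFn (fun i : Fin n => if i.val = 0 ∨ n + 2 - k ≤ i.val then H else p)
      = H :: (List.replicate (n + 1 - k) p ++ List.replicate (k - 2) H) := by
  rw [List.ofFn_eq_map]
  have h1 : (List.finRange n).map
        (fun i : Fin n => if i.val = 0 ∨ n + 2 - k ≤ i.val then H else p)
      = (List.range n).map (fun m => if m = 0 ∨ n + 2 - k ≤ m then H else p) := by
    apply List.ext_getElem <;> simp
  rw [h1]
  have e1 : List.range' 1 (n + 1 - k) 1 ++ List.range' (n + 2 - k) (k - 2) 1
      = List.range' 1 (n - 1) 1 := by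
    have := List.range'_append (s := 1) (m := n + 1 - k) (n := k - 2) (step := 1)
    rw [show 1 + 1 * (n + 1 - k) = n + 2 - k by omega] at this
    rw [this]
    congr 1
    omega
  have e2 : List.range n = List.range' 0 1 1 ++ (List.range' 1 (n + 1 - k) 1
      ++ List.range' (n + 2 - k) (k - 2) 1) := by
    rw [e1, List.range_eq_range']
    have := List.range'_append (s := 0) (m := 1) (n := n - 1) (step := 1)
    rw [show 0 + 1 * 1 = 1 by omega] at this
    rw [this]
    congr 1
    omega
  have hA : (List.range' 0 1 1).map (fun m => if m = 0 ∨ n + 2 - k ≤ m then H else p)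
      = [H] := by
    rw [List.range'_one]
    simp
  have hB : (List.range' 1 (n + 1 - k) 1).map
      (fun m => if m = 0 ∨ n + 2 - k ≤ m then H else p) = List.replicate (n + 1 - k) p := by
    have h : ∀ m ∈ List.range' 1 (n + 1 - k) 1,
        (if m = 0 ∨ n + 2 - k ≤ m then H else p) = p := by
      intro m hm
      rw [List.mem_range'_1] at hm
      rw [if_neg (by omega)]
    rw [List.map_congr_left h, List.map_const', List.length_range']
  have hC : (List.range' (n + 2 - k) (k - 2) 1).map
      (fun m => if m = 0 ∨ n + 2 - k ≤ m then H else p) = List.replicate (k - 2) H := by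
    have h : ∀ m ∈ List.range' (n + 2 - k) (k - 2) 1,
        (if m = 0 ∨ n + 2 - k ≤ m then H else p) = H := by
      intro m hm
      rw [List.mem_range'_1] at hm
      rw [if_pos (by omega)]
    rw [List.map_congr_left h, List.map_const', List.length_range']
  rw [e2, List.map_append, List.map_append, hA, hB, hC]
  rfl

lemma construct_le {n : ℕ} (hn : 2 ≤ n) (v : Fin n → ℝ) (hv : StrictAnti v)
    (hvpos : ∀ i, 0 < v i) (k : ℕ) (hk2 : 2 ≤ k) (hkn : k ≤ n) (p : ℝ)
    (hp1 : vIdx v (n + 3 - k) ≤ p) (hp2 : p ≤ v ⟨0, (by omega : 0 + 0 < n)⟩) (hp0 : 0 ≤ p) :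
    ∃ b : Fin n → ℝ, NashEq v k b ∧ price k b = p := by
  set v0 : ℝ := v ⟨0, by omega⟩ with hv0
  set H : ℝ := v0 + 1 with hH
  have hpH : p < H := lt_of_le_of_lt hp2 (lt_add_one _)
  have hH0 : 0 ≤ H := le_trans hp0 (le_of_lt hpH)
  set b : Fin n → ℝ := fun i => if i.val = 0 ∨ n + 2 - k ≤ i.val then H else p with hb
  set s : List ℝ := List.replicate (k - 1) H ++ List.replicate (n + 1 - k) p with hs
  have hkne : k ≠ n + 1 := by omega
  have hscons : s = H :: (List.replicate (k - 2) H ++ List.replicate (n + 1 - k) p) := by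
    rw [hs, show k - 1 = (k - 2) + 1 by omega, List.replicate_succ, List.cons_append]
  have hofn : List.ofFn b = H :: (List.replicate (n + 1 - k) p
      ++ List.replicate (k - 2) H) := ofFn_bid n k hn hk2 hkn H p
  have hperm : (List.ofFn b).Perm s := by
    rw [hofn, hscons]
    exact (List.perm_append_comm).cons H
  have hsorted : s.Pairwise (· ≥ ·) := by
    refine List.pairwise_append.mpr ⟨?_, ?_, ?_⟩
    · exact List.pairwise_replicate.mpr (Or.inr le_rfl)
    · exact List.pairwise_replicate.mpr (Or.inr le_rfl)
    · intro a ha c hc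
      rw [List.eq_of_mem_replicate ha, List.eq_of_mem_replicate hc]
      exact le_of_lt hpH
  have hslen : s.length = n := by
    rw [hs, List.length_append, List.length_replicate, List.length_replicate]; omega
  have hsmem : ∀ x ∈ s, x ≤ H := by
    intro x hx
    rcases List.mem_append.mp hx with h | h
    · rw [List.eq_of_mem_replicate h]
    · rw [List.eq_of_mem_replicate h]; exact le_of_lt hpH
  have hprice : price k b = p := by
    rw [price, if_neg hkne, kthHighest_eq_of b s hsorted hperm, hs]
    exact getD_repl_append_right H p (le_refl _) (by omega)
  have hz : (0:ℕ) < n := by omega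
  have hbp : ∀ j, p ≤ b j := by
    intro j
    by_cases hc : (j : ℕ) = 0 ∨ n + 2 - k ≤ (j : ℕ)
    · rw [show b j = H from if_pos hc]; exact le_of_lt hpH
    · rw [show b j = p from if_neg hc]
  have hbH : ∀ j, b j ≤ H := by
    intro j
    by_cases hc : (j : ℕ) = 0 ∨ n + 2 - k ≤ (j : ℕ)
    · rw [show b j = H from if_pos hc]
    · rw [show b j = p from if_neg hc]; exact le_of_lt hpH
  have hb0 : b ⟨0, hz⟩ = H := if_pos (Or.inl rfl)
  have hb1 : b ⟨1, by omega⟩ = p := if_neg (by simp; omega)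
  have hwin0 : wins b ⟨0, hz⟩ := by
    constructor
    · intro j; rw [hb0]; exact hbH j
    · intro j _; exact Fin.mk_le_of_le_val (Nat.zero_le _)
  have honly : ∀ i, wins b i → i = ⟨0, hz⟩ := by
    intro i hi
    have h1 : b i = H := le_antisymm (hbH i) (hb0 ▸ hi.1 ⟨0, hz⟩)
    have h2 := hi.2 ⟨0, hz⟩ (by rw [hb0, h1])
    exact le_antisymm h2 (Fin.mk_le_of_le_val (Nat.zero_le _))
  refine ⟨b, ⟨?_, ?_⟩, hprice⟩
  · intro i; exact le_trans hp0 (hbp i)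
  intro i b' hb'
  simp only [utility]
  by_cases hi0 : i = ⟨0, hz⟩
  · subst hi0
    rw [if_pos hwin0, hprice]
    set u := Function.update b ⟨0, hz⟩ b' with hu
    by_cases hw : wins u ⟨0, hz⟩
    · rw [if_pos hw]
      have hall : ∀ j, p ≤ u j := by
        intro j
        by_cases hj : j = ⟨0, hz⟩
        · subst hj
          have h1 := hw.1 ⟨1, by omega⟩
          have h2 : u ⟨1, by omega⟩ = p := by
            rw [hu, Function.update_of_ne (by intro h; simp [Fin.ext_iff] at h) _ _, hb1]
          rw [h2] at h1; exact h1
        · rw [hu, Function.update_of_ne hj]; exact hbp j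
      have hge : p ≤ price k u := by
        rw [price, if_neg hkne]
        exact kthHighest_ge u hall (by omega : k - 1 < n)
      linarith
    · rw [if_neg hw]; linarith
  · rw [if_neg (fun hw => hi0 (honly i hw))]
    set u := Function.update b i b' with hu
    by_cases hw : wins u i
    swap
    · rw [if_neg hw]
    rw [if_pos hw]
    have hu0 : u ⟨0, hz⟩ = H := by
      rw [hu, Function.update_of_ne (fun h => hi0 h.symm), hb0]
    have hui : u i = b' := by rw [hu, Function.update_self]
    have hHb' : H ≤ b' := by
      have := hw.1 ⟨0, hz⟩; rw [hu0, hui] at this; exact this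
    have hb'H : H < b' := by
      rcases lt_or_eq_of_le hHb' with h | h
      · exact h
      · exfalso
        have h2 := hw.2 ⟨0, hz⟩ (by rw [hu0, hui, h])
        exact hi0 (le_antisymm h2 (Fin.mk_le_of_le_val (Nat.zero_le _)))
    have hpermu := perm_update b i b' s hperm
    have htmem : ∀ x ∈ s.erase (b i), x ≤ H := fun x hx => hsmem x (List.mem_of_mem_erase hx)
    by_cases hC : i.val = 0 ∨ n + 2 - k ≤ i.val
    · -- high bidder, b i = H
      have hbi : b i = H := by rw [hb]; exact if_pos hC
      have hik : n + 2 - k ≤ i.val := by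
        rcases hC with h | h
        · exact absurd (Fin.ext h) hi0
        · exact h
      have hk3 : 3 ≤ k := by have := i.isLt; omega
      have ht : s.erase (b i) = List.replicate (k - 2) H ++ List.replicate (n + 1 - k) p := by
        rw [hbi, hscons, List.erase_cons_head]
      set t : List ℝ := List.replicate (k - 2) H ++ List.replicate (n + 1 - k) p with hts
      have htsorted : (b' :: t).Pairwise (· ≥ ·) := by
        rw [List.pairwise_cons]
        constructor
        · intro x hx
          have : x ≤ H := by
            rw [← ht] at hx; exact htmem x hx
          linarith
        · refine List.pairwise_append.mpr ⟨?_, ?_, ?_⟩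
          · exact List.pairwise_replicate.mpr (Or.inr le_rfl)
          · exact List.pairwise_replicate.mpr (Or.inr le_rfl)
          · intro a ha c hc
            rw [List.eq_of_mem_replicate ha, List.eq_of_mem_replicate hc]
            exact le_of_lt hpH
      have hpu : price k u = p := by
        rw [price, if_neg hkne]
        rw [kthHighest_eq_of u (b' :: t) htsorted (by rw [← ht]; exact hpermu)]
        rw [show k - 1 = (k - 2) + 1 by omega, List.getD_cons_succ, hts]
        exact getD_repl_append_right H p (le_refl _) (by omega)
      rw [hpu]
      have hvle : v i ≤ p := by
        refine le_trans ?_ hp1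
        have : vIdx v (n + 3 - k) = v ⟨n + 2 - k, by omega⟩ := by
          rw [vIdx, dif_pos (by omega : 1 ≤ n + 3 - k ∧ n + 3 - k ≤ n)]
          congr 1
          apply Fin.ext
          show n + 3 - k - 1 = n + 2 - k
          omega
        rw [this]
        exact hv.antitone (by rw [Fin.le_def]; exact hik)
      linarith
    · -- middle bidder, b i = p
      have hbi : b i = p := by rw [hb]; exact if_neg hC
      have ht : s.erase (b i) = List.replicate (k - 1) H ++ List.replicate (n - k) p := by
        rw [hbi, hs]
        rw [List.erase_append_right _ (fun hmem => (hpH.ne (List.eq_of_mem_replicate hmem)))]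
        rw [show n + 1 - k = (n - k) + 1 by omega, List.replicate_succ, List.erase_cons_head]
      set t : List ℝ := List.replicate (k - 1) H ++ List.replicate (n - k) p with hts
      have htsorted : (b' :: t).Pairwise (· ≥ ·) := by
        rw [List.pairwise_cons]
        constructor
        · intro x hx
          have : x ≤ H := by rw [← ht] at hx; exact htmem x hx
          linarith
        · refine List.pairwise_append.mpr ⟨?_, ?_, ?_⟩
          · exact List.pairwise_replicate.mpr (Or.inr le_rfl)
          · exact List.pairwise_replicate.mpr (Or.inr le_rfl)
          · intro a ha c hc
            rw [List.eq_of_mem_replicate ha, List.eq_of_mem_replicate hc]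
            exact le_of_lt hpH
      have hpu : price k u = H := by
        rw [price, if_neg hkne]
        rw [kthHighest_eq_of u (b' :: t) htsorted (by rw [← ht]; exact hpermu)]
        rw [show k - 1 = (k - 2) + 1 by omega, List.getD_cons_succ, hts]
        exact getD_repl_append_left H p (by omega)
      rw [hpu]
      have : v i ≤ v0 := hv.antitone (Fin.mk_le_of_le_val (Nat.zero_le _) : (⟨0, hz⟩:Fin n) ≤ i)
      rw [hH]
      linarith

end Construct

section ConstructFirst

open List

lemma construct_first {n : ℕ} (hn : 2 ≤ n) (v : Fin n → ℝ) (hv : StrictAnti v)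
    (hvpos : ∀ i, 0 < v i) (p : ℝ)
    (hp1 : v ⟨1, by omega⟩ ≤ p) (hp2 : p ≤ v ⟨0, (by omega : 0 + 0 < n)⟩) (hp0 : 0 ≤ p) :
    ∃ b : Fin n → ℝ, NashEq v (n + 1) b ∧ price (n + 1) b = p := by
  have hz : (0:ℕ) < n := by omega
  set b : Fin n → ℝ := fun _ => p with hb
  have hofn : List.ofFn b = List.replicate n p := List.ofFn_const n p
  have hsorted : (List.replicate n p).Pairwise (· ≥ ·) :=
    List.pairwise_replicate.mpr (Or.inr le_rfl)
  have hprice : price (n + 1) b = p := by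
    rw [price, if_pos rfl, kthHighest_eq_of b _ hsorted (hofn ▸ List.Perm.refl _)]
    rw [List.getD_eq_getElem _ _ (by simp; omega)]
    exact List.getElem_replicate _
  have hwin0 : wins b ⟨0, hz⟩ := by
    refine ⟨fun j => le_rfl, fun j _ => Fin.mk_le_of_le_val (Nat.zero_le _)⟩
  have honly : ∀ i, wins b i → i = ⟨0, hz⟩ := by
    intro i hi
    exact le_antisymm (hi.2 ⟨0, hz⟩ rfl) (Fin.mk_le_of_le_val (Nat.zero_le _))
  -- sorted list for a deviation b' ≥ p
  have hdev : ∀ (i : Fin n) (b' : ℝ), p ≤ b' →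
      price (n + 1) (Function.update b i b') = b' := by
    intro i b' hpb'
    have hpermu : (List.ofFn (Function.update b i b')).Perm
        (b' :: (List.replicate n p).erase p) :=
      perm_update b i b' _ (hofn ▸ List.Perm.refl _)
    have herase : (List.replicate n p).erase p = List.replicate (n - 1) p := by
      rw [show n = (n - 1) + 1 by omega, List.replicate_succ, List.erase_cons_head]
      congr 1
    have hsort2 : (b' :: List.replicate (n - 1) p).Pairwise (· ≥ ·) := by
      rw [List.pairwise_cons]
      exact ⟨fun x hx => (List.eq_of_mem_replicate hx) ▸ hpb',
        List.pairwise_replicate.mpr (Or.inr le_rfl)⟩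
    rw [price, if_pos rfl,
      kthHighest_eq_of _ (b' :: List.replicate (n - 1) p) hsort2 (herase ▸ hpermu)]
    simp
  refine ⟨b, ⟨fun i => hp0, ?_⟩, hprice⟩
  intro i b' hb'
  simp only [utility]
  by_cases hi0 : i = ⟨0, hz⟩
  · subst hi0
    rw [if_pos hwin0, hprice]
    set u := Function.update b ⟨0, hz⟩ b' with hu
    by_cases hw : wins u ⟨0, hz⟩
    · rw [if_pos hw]
      have hpb' : p ≤ b' := by
        have h1 := hw.1 ⟨1, by omega⟩
        have h2 : u ⟨1, by omega⟩ = p := by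
          rw [hu, Function.update_of_ne (by intro h; simp [Fin.ext_iff] at h) _ _]
        have h3 : u ⟨0, hz⟩ = b' := by rw [hu, Function.update_self]
        rw [h2, h3] at h1; exact h1
      rw [hdev _ _ hpb']
      linarith
    · rw [if_neg hw]; linarith
  · rw [if_neg (fun hw => hi0 (honly i hw))]
    set u := Function.update b i b' with hu
    by_cases hw : wins u i
    swap
    · rw [if_neg hw]
    rw [if_pos hw]
    have hu0 : u ⟨0, hz⟩ = p := by
      rw [hu, Function.update_of_ne (fun h => hi0 h.symm)]
    have hui : u i = b' := by rw [hu, Function.update_self]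
    have hpb' : p ≤ b' := by have := hw.1 ⟨0, hz⟩; rw [hu0, hui] at this; exact this
    have hlt : p < b' := by
      rcases lt_or_eq_of_le hpb' with h | h
      · exact h
      · exfalso
        have h2 := hw.2 ⟨0, hz⟩ (by rw [hu0, hui, h])
        exact hi0 (le_antisymm h2 (Fin.mk_le_of_le_val (Nat.zero_le _)))
    rw [hdev _ _ hpb']
    have : v i ≤ v ⟨1, by omega⟩ := by
      rcases eq_or_lt_of_le (Fin.mk_le_of_le_val (Nat.zero_le _) : (⟨0, hz⟩:Fin n) ≤ i) with h | h
      · exact absurd h.symm hi0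
      · refine hv.antitone ?_
        have h4 : (0:ℕ) < i.val := h
        rw [Fin.le_def]
        show (1:ℕ) ≤ i.val
        omega
    linarith

end ConstructFirst

section Necessity

open List

lemma mem_le_getD_head {l : List ℝ} (hs : l.Pairwise (· ≥ ·)) {x : ℝ} (hx : x ∈ l) :
    x ≤ l.getD 0 0 := by
  obtain ⟨m, hm, he⟩ := List.mem_iff_getElem.mp hx
  rw [List.getD_eq_getElem _ _ (by omega : 0 < l.length)]
  rw [← he]
  exact sorted_getElem_le hs (Nat.zero_le m) hm

lemma bid_le_sortD_head {n : ℕ} (b : Fin n → ℝ) (j : Fin n) :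
    b j ≤ (sortD b).getD 0 0 :=
  mem_le_getD_head (sortD_sorted b)
    ((sortD_perm b).mem_iff.mpr (List.mem_ofFn.mpr ⟨j, rfl⟩))

lemma getD_replicate_zero (m j : ℕ) : (List.replicate m (0:ℝ)).getD j 0 = 0 := by
  by_cases h : j < m
  · rw [List.getD_eq_getElem _ _ (by simpa using h)]
    exact List.getElem_replicate _
  · rw [List.getD_eq_default _ _ (by simpa using le_of_not_gt h)]

lemma kthHighest_zero {n : ℕ} (j : ℕ) : kthHighest (fun _ : Fin n => (0:ℝ)) j = 0 := by
  rw [kthHighest_eq_of _ (List.replicate n 0)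
    (List.pairwise_replicate.mpr (Or.inr le_rfl))
    ((List.ofFn_const n (0:ℝ)) ▸ List.Perm.refl _)]
  exact getD_replicate_zero _ _

lemma price_nonneg {n k : ℕ} (b : Fin n → ℝ) (hb : ∀ i, 0 ≤ b i) : 0 ≤ price k b := by
  rw [price]
  split
  · exact kthHighest_nonneg b hb 1
  · exact kthHighest_nonneg b hb k

lemma rev_le_top {n : ℕ} (hn : 2 ≤ n) (v : Fin n → ℝ) (hv : StrictAnti v)
    (hvpos : ∀ i, 0 < v i) (k : ℕ) (b : Fin n → ℝ) (hNE : NashEq v k b) :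
    price k b ≤ v ⟨0, (by omega : 0 + 0 < n)⟩ := by
  obtain ⟨w, hw⟩ := exists_wins (by omega) b
  have hvw : v w ≤ v ⟨0, by omega⟩ := hv.antitone (Fin.mk_le_of_le_val (Nat.zero_le _))
  have h := hNE.2 w 0 le_rfl
  simp only [utility] at h
  rw [if_pos hw] at h
  by_cases hw0 : wins (Function.update b w 0) w
  · rw [if_pos hw0] at h
    have hz : ∀ j, Function.update b w 0 j = 0 := by
      intro j
      by_cases hj : j = w
      · subst hj; rw [Function.update_self]
      · rw [Function.update_of_ne hj]
        refine le_antisymm ?_ (hNE.1 j)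
        have h1 := hw0.1 j
        rwa [Function.update_of_ne hj, Function.update_self] at h1
    have hupd : Function.update b w 0 = fun _ => (0:ℝ) := funext hz
    have hpz : price k (Function.update b w 0) = 0 := by
      rw [hupd, price]
      split
      · exact kthHighest_zero 1
      · exact kthHighest_zero k
    rw [hpz, sub_zero] at h
    have h0 : 0 ≤ price k b := price_nonneg b hNE.1
    have hp0 : price k b ≤ 0 := by linarith
    linarith [hvpos ⟨0, by omega⟩]
  · rw [if_neg hw0] at h
    linarith

lemma rev_first_lb {n : ℕ} (hn : 2 ≤ n) (v : Fin n → ℝ) (hv : StrictAnti v)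
    (hvpos : ∀ i, 0 < v i) (b : Fin n → ℝ) (hNE : NashEq v (n + 1) b) :
    v ⟨1, by omega⟩ ≤ price (n + 1) b := by
  by_contra hlt
  push_neg at hlt
  set p := price (n + 1) b with hp'
  have hp0 : 0 ≤ p := price_nonneg b hNE.1
  have hprice : p = (sortD b).getD 0 0 := by
    rw [hp', price, if_pos rfl, kthHighest_def]
  have hmax : ∀ j, b j ≤ p := by
    intro j; rw [hprice]; exact bid_le_sortD_head b j
  obtain ⟨w, hw⟩ := exists_wins (by omega) b
  set i : Fin n := if w.val = 0 then ⟨1, by omega⟩ else ⟨0, by omega⟩ with hi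
  have hiw : i ≠ w := by
    rw [hi]
    split
    · rename_i hwv
      intro he
      have := congrArg Fin.val he
      simp at this
      omega
    · rename_i hwv
      intro he
      have := congrArg Fin.val he
      simp at this
      omega
  have hvi : v ⟨1, by omega⟩ ≤ v i := by
    rw [hi]
    split
    · exact le_rfl
    · exact hv.antitone (Fin.mk_le_of_le_val (Nat.zero_le _))
  have hvip : p < v i := lt_of_lt_of_le hlt hvi
  set c := (p + v i) / 2 with hc
  have hc1 : p < c := by rw [hc]; linarith
  have hc2 : c < v i := by rw [hc]; linarith
  have hc0 : 0 ≤ c := by linarith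
  have h := hNE.2 i c hc0
  have hloser : ¬ wins b i := fun hwin => hiw (wins_unique hwin hw)
  simp only [utility] at h
  rw [if_neg hloser] at h
  have hwin : wins (Function.update b i c) i := by
    constructor
    · intro j
      by_cases hj : j = i
      · subst hj; exact le_rfl
      · rw [Function.update_of_ne hj, Function.update_self]
        exact le_of_lt (lt_of_le_of_lt (hmax j) hc1)
    · intro j hj
      by_cases hjne : j = i
      · subst hjne; exact le_rfl
      · exfalso
        rw [Function.update_of_ne hjne, Function.update_self] at hj
        exact absurd hj (ne_of_lt (lt_of_le_of_lt (hmax j) hc1))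
  rw [if_pos hwin] at h
  have hpu : price (n + 1) (Function.update b i c) = c := by
    rw [price, if_pos rfl]
    have hpermu := perm_update b i c (sortD b) (sortD_perm b).symm
    have hts : (c :: (sortD b).erase (b i)).Pairwise (· ≥ ·) := by
      rw [List.pairwise_cons]
      constructor
      · intro x hx
        have hxs : x ≤ (sortD b).getD 0 0 :=
          mem_le_getD_head (sortD_sorted b) (List.mem_of_mem_erase hx)
        rw [← hprice] at hxs
        exact le_of_lt (lt_of_le_of_lt hxs hc1)
      · exact List.Pairwise.sublist List.erase_sublist (sortD_sorted b)
    rw [kthHighest_eq_of _ _ hts hpermu]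
    simp
  rw [hpu] at h
  linarith

end Necessity

section Pigeonhole

open List

lemma countP_ofFn {n : ℕ} (b : Fin n → ℝ) (q : ℝ → Prop) [DecidablePred q] :
    ((List.ofFn b).countP (fun x => decide (q x)))
      = (Finset.univ.filter (fun i => q (b i))).card := by
  rw [List.ofFn_eq_map, List.countP_map]
  rw [Fin.univ_def]
  simp only [Finset.filter, Finset.card, Multiset.filter_coe, Multiset.coe_card]
  simp [List.countP_eq_length_filter]
  congr 1

lemma rev_mid_lb {n : ℕ} (hn : 2 ≤ n) (v : Fin n → ℝ) (hv : StrictAnti v)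
    (hvpos : ∀ i, 0 < v i) (k : ℕ) (hk3 : 3 ≤ k) (hkn : k ≤ n) (b : Fin n → ℝ)
    (hNE : NashEq v k b) : v ⟨n + 2 - k, by omega⟩ ≤ price k b := by
  by_contra hcon
  push_neg at hcon
  set p := price k b with hp'
  have hkne : k ≠ n + 1 := by omega
  have hslen : (sortD b).length = n := sortD_length b
  have hsorted := sortD_sorted b
  have hsp : p = (sortD b).getD (k - 1) 0 := by
    rw [hp', price, if_neg hkne, kthHighest_def]
  obtain ⟨w, hw⟩ := exists_wins (by omega) b
  -- the deviation sub-lemma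
  have hdev : ∀ i : Fin n, ¬ wins b i → p < v i →
      b i ≤ p ∧ p < (sortD b).getD (k - 2) 0 := by
    intro i hli hpi
    set B := (sortD b).getD 0 0 + 1 with hB
    have hBgt : ∀ j, b j < B := fun j =>
      lt_of_le_of_lt (bid_le_sortD_head b j) (lt_add_one _)
    have hB0 : 0 ≤ B := le_trans (hNE.1 i) (le_of_lt (hBgt i))
    have h := hNE.2 i B hB0
    simp only [utility] at h
    rw [if_neg hli] at h
    have hwin : wins (Function.update b i B) i := by
      constructor
      · intro j
        by_cases hj : j = i
        · subst hj; exact le_rfl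
        · rw [Function.update_of_ne hj, Function.update_self]
          exact le_of_lt (hBgt j)
      · intro j hj
        by_cases hjne : j = i
        · subst hjne; exact le_rfl
        · exfalso
          rw [Function.update_of_ne hjne, Function.update_self] at hj
          exact absurd hj (ne_of_lt (hBgt j))
    rw [if_pos hwin] at h
    have hmemt : ∀ x ∈ (sortD b).erase (b i), x ≤ (sortD b).getD 0 0 :=
      fun x hx => mem_le_getD_head hsorted (List.mem_of_mem_erase hx)
    have htsort : (B :: (sortD b).erase (b i)).Pairwise (· ≥ ·) := by
      rw [List.pairwise_cons]
      exact ⟨fun x hx => le_of_lt (lt_of_le_of_lt (hmemt x hx) (lt_add_one _)),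
        List.Pairwise.sublist List.erase_sublist hsorted⟩
    have hpu : price k (Function.update b i B)
        = ((sortD b).erase (b i)).getD (k - 2) 0 := by
      rw [price, if_neg hkne,
        kthHighest_eq_of _ _ htsort (perm_update b i B (sortD b) (sortD_perm b).symm)]
      rw [show k - 1 = (k - 2) + 1 by omega, List.getD_cons_succ]
    rw [hpu] at h
    have hti : v i ≤ ((sortD b).erase (b i)).getD (k - 2) 0 := by linarith
    have hbmem : b i ∈ sortD b :=
      (sortD_perm b).mem_iff.mpr (List.mem_ofFn.mpr ⟨i, rfl⟩)
    obtain ⟨l₁, l₂, hnm, hsplit, herase⟩ := List.exists_erase_eq hbmem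
    have hlen2 : l₁.length + 1 + l₂.length = n := by
      have := hslen
      rw [hsplit, List.length_append, List.length_cons] at this
      omega
    by_cases hq : l₁.length ≤ k - 2
    · exfalso
      have e1 : ((sortD b).erase (b i)).getD (k - 2) 0 = l₂.getD (k - 2 - l₁.length) 0 := by
        rw [herase, List.getD_append_right _ _ _ _ hq]
      have e2 : (sortD b).getD (k - 1) 0 = l₂.getD (k - 2 - l₁.length) 0 := by
        rw [hsplit, List.getD_append_right _ _ _ _ (by omega : l₁.length ≤ k - 1)]
        rw [show k - 1 - l₁.length = (k - 2 - l₁.length) + 1 by omega, List.getD_cons_succ]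
      rw [e1, ← e2, ← hsp] at hti
      linarith
    · push_neg at hq
      constructor
      · -- b i = s[l₁.length] ≤ s[k-1] = p
        have hqn : l₁.length < n := by omega
        have e3 : (sortD b).getD l₁.length 0 = b i := by
          rw [hsplit, List.getD_append_right _ _ _ _ (le_refl _), Nat.sub_self,
            List.getD_cons_zero]
        have hle : (sortD b).getD l₁.length 0 ≤ (sortD b).getD (k - 1) 0 := by
          rw [List.getD_eq_getElem _ _ (by omega), List.getD_eq_getElem _ _ (by omega)]
          exact sorted_getElem_le hsorted (by omega) (by omega)
        rw [e3, ← hsp] at hle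
        exact hle
      · have e4 : ((sortD b).erase (b i)).getD (k - 2) 0 = l₁.getD (k - 2) 0 := by
          rw [herase, List.getD_append _ _ _ _ hq]
        have e5 : (sortD b).getD (k - 2) 0 = l₁.getD (k - 2) 0 := by
          rw [hsplit, List.getD_append _ _ _ _ hq]
        rw [e4, ← e5] at hti
        exact lt_of_lt_of_le hpi hti
  -- the losers' set
  set A : Finset (Fin n) := Finset.univ.filter (fun i => ¬ wins b i ∧ p < v i) with hA
  have hvgt : ∀ i : Fin n, i.val ≤ n + 2 - k → p < v i := by
    intro i hi
    refine lt_of_lt_of_le hcon (hv.antitone ?_)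
    rw [Fin.le_def]
    exact hi
  have hgbound : ∀ j : Fin (n + 2 - k),
      (if j.val < w.val then j.val else j.val + 1) < n := by
    intro j
    have := j.isLt
    split <;> omega
  set g : Fin (n + 2 - k) → Fin n :=
    fun j => ⟨if j.val < w.val then j.val else j.val + 1, hgbound j⟩ with hg
  have hgval : ∀ j, (g j).val = if j.val < w.val then j.val else j.val + 1 :=
    fun j => rfl
  have hgA : ∀ j, g j ∈ A := by
    intro j
    have hj := j.isLt
    have hne : g j ≠ w := by
      intro he
      have := congrArg Fin.val he
      rw [hgval] at this
      split at this <;> omega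
    rw [hA, Finset.mem_filter]
    refine ⟨Finset.mem_univ _, fun hwin => hne (wins_unique hwin hw), ?_⟩
    refine hvgt _ ?_
    rw [hgval]
    split <;> omega
  have hginj : Set.InjOn g (Finset.univ : Finset (Fin (n + 2 - k))) := by
    intro a _ c _ he
    have hvv := congrArg Fin.val he
    rw [hgval, hgval] at hvv
    apply Fin.ext
    split_ifs at hvv <;> omega
  have hcard : n + 2 - k ≤ A.card := by
    have := Finset.card_le_card_of_injOn g (fun a _ => hgA a) hginj
    rwa [Finset.card_fin] at this
  have hAne : A.Nonempty := Finset.card_pos.mp (by omega)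
  obtain ⟨i₀, hi₀⟩ := hAne
  rw [hA, Finset.mem_filter] at hi₀
  have hsk2 : p < (sortD b).getD (k - 2) 0 := (hdev i₀ hi₀.2.1 hi₀.2.2).2
  set F : Finset (Fin n) := Finset.univ.filter (fun i => b i ≤ p) with hF
  have hsub : A ⊆ F := by
    intro i hi
    rw [hA, Finset.mem_filter] at hi
    rw [hF, Finset.mem_filter]
    exact ⟨Finset.mem_univ _, (hdev i hi.2.1 hi.2.2).1⟩
  have hFcard : F.card = n - (k - 1) := by
    rw [hF, ← countP_ofFn b (fun x => x ≤ p)]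
    rw [← (sortD_perm b).countP_eq]
    have hsk2g : p < (sortD b)[k - 2]'(by omega) := by
      rwa [List.getD_eq_getElem _ _ (by omega : k - 2 < (sortD b).length)] at hsk2
    have hspg : p = (sortD b)[k - 1]'(by omega) := by
      rwa [List.getD_eq_getElem _ _ (by omega : k - 1 < (sortD b).length)] at hsp
    conv_lhs => rw [← List.take_append_drop (k - 1) (sortD b)]
    rw [List.countP_append]
    have h1 : List.countP (fun x => decide (x ≤ p)) ((sortD b).take (k - 1)) = 0 := by
      rw [List.countP_eq_zero]
      intro x hx
      obtain ⟨m, hm, he⟩ := List.mem_iff_getElem.mp hx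
      have hmlt : m < k - 1 := by
        have := hm
        rw [List.length_take] at this
        omega
      have hxe : x = (sortD b)[m]'(by omega) := by
        rw [← he, List.getElem_take]
      have : (sortD b)[k - 2]'(by omega) ≤ (sortD b)[m]'(by omega) :=
        sorted_getElem_le hsorted (by omega) (by omega)
      simp only [decide_eq_true_eq]
      rw [hxe]
      push_neg
      linarith
    have h2 : List.countP (fun x => decide (x ≤ p)) ((sortD b).drop (k - 1))
        = ((sortD b).drop (k - 1)).length := by
      rw [List.countP_eq_length]
      intro x hx
      obtain ⟨m, hm, he⟩ := List.mem_iff_getElem.mp hx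
      have hmlt : (k - 1) + m < n := by
        have := hm
        rw [List.length_drop] at this
        omega
      have hxe : x = (sortD b)[(k - 1) + m]'(by omega) := by
        rw [← he, List.getElem_drop]
      have : (sortD b)[(k - 1) + m]'(by omega) ≤ (sortD b)[k - 1]'(by omega) :=
        sorted_getElem_le hsorted (by omega) (by omega)
      simp only [decide_eq_true_eq]
      rw [hxe]
      linarith
    rw [h1, h2, List.length_drop, hslen]
    omega
  have hle := Finset.card_le_card hsub
  omega

end Pigeonhole

theorem stmt6 {n : ℕ} (hn : 2 ≤ n) (v : Fin n → ℝ) (hv : StrictAnti v) (hvpos : ∀ i, 0 < v i) (k : ℕ) (hk2 : 2 ≤ k) (hkn : k ≤ n + 1) (p : ℝ) :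
    (∃ b : Fin n → ℝ, NashEq v k b ∧ price k b = p) ↔
    (vIdx v (n + 3 - k) ≤ p ∧ p ≤ v ⟨0, by omega⟩) := by
  constructor
  · rintro ⟨b, hNE, hpb⟩
    constructor
    · rcases eq_or_lt_of_le hk2 with hk2' | hk3
      · -- k = 2
        rw [show n + 3 - k = n + 1 by omega, vIdx, dif_neg (by omega)]
        rw [← hpb]
        exact price_nonneg b hNE.1
      · rcases eq_or_lt_of_le hkn with hkeq | hklt
        · -- k = n + 1
          subst hkeq
          rw [show n + 3 - (n + 1) = 2 by omega, vIdx, dif_pos (by omega : 1 ≤ 2 ∧ 2 ≤ n)]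
          rw [← hpb]
          have h := rev_first_lb hn v hv hvpos b hNE
          have he : (⟨2 - 1, by omega⟩ : Fin n) = ⟨1, by omega⟩ := Fin.ext rfl
          rw [he]
          exact h
        · -- 3 ≤ k ≤ n
          rw [vIdx, dif_pos (by omega : 1 ≤ n + 3 - k ∧ n + 3 - k ≤ n)]
          rw [← hpb]
          have h := rev_mid_lb hn v hv hvpos k (by omega) (by omega) b hNE
          have he : (⟨n + 3 - k - 1, by omega⟩ : Fin n) = ⟨n + 2 - k, by omega⟩ :=
            Fin.ext (by show n + 3 - k - 1 = n + 2 - k; omega)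
          rw [he]
          exact h
    · rw [← hpb]
      exact rev_le_top hn v hv hvpos k b hNE
  · rintro ⟨hp1, hp2⟩
    have hp0 : 0 ≤ p := by
      by_cases hc : 1 ≤ n + 3 - k ∧ n + 3 - k ≤ n
      · rw [vIdx, dif_pos hc] at hp1
        exact le_trans (le_of_lt (hvpos _)) hp1
      · rw [vIdx, dif_neg hc] at hp1
        exact hp1
    rcases eq_or_lt_of_le hkn with hkeq | hklt
    · subst hkeq
      refine construct_first hn v hv hvpos p ?_ hp2 hp0
      rw [show n + 3 - (n + 1) = 2 by omega, vIdx, dif_pos (by omega : 1 ≤ 2 ∧ 2 ≤ n)] at hp1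
      have he : (⟨2 - 1, by omega⟩ : Fin n) = ⟨1, by omega⟩ := Fin.ext rfl
      rwa [he] at hp1
    · exact construct_le hn v hv hvpos k hk2 (by omega) p hp1 hp2 hp0
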